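/- Suppose for each $n \in \mathbb{N}\cup\{\infty\}$ we are given a sequence $(A_i^n)_{i\in\mathbb{Z}}$ of nonnegative reals with $(A_i^n) \in \ell^1(\mathbb{Z})$, and $(A_i^n) \to (A_i^\infty)$ in $\ell^1(\mathbb{Z})$ as $n\to\infty$. Then there exists a sequence of positive weights $(\omega_i)_{i\in\mathbb{Z}}$ satisfying $0 < \omega_i \leq \omega_{i+1} \leq 2^{1/2}\omega_i$ for all $i$, $\lim_{i\to+\infty}\omega_i = +\infty$, and $\sup_{n} \sum_{i=-\infty}^{+\infty} \omega_i A_i^n < \infty$. -/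

import Mathlib

open Filter

/-- Tail sum of a sequence indexed by `ℤ`, from `m` to `+∞`. -/
noncomputable def zTail (f : ℤ → ℝ) (m : ℤ) : ℝ := ∑' i, if m ≤ i then f i else 0

lemma zTail_summable {f : ℤ → ℝ} (hf : Summable f) (m : ℤ) :
    Summable fun i => if m ≤ i then f i else 0 := by
  exact (hf.indicator {i : ℤ | m ≤ i}).congr fun i => by
    simp [Set.indicator_apply]

lemma zTail_anti {f : ℤ → ℝ} (hf : Summable f) (h0 : ∀ i, 0 ≤ f i) {m m' : ℤ}
    (h : m ≤ m') : zTail f m' ≤ zTail f m := by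
  apply Summable.tsum_le_tsum _ (zTail_summable hf m') (zTail_summable hf m)
  intro i
  by_cases h1 : m' ≤ i
  · simp [h1, h.trans h1]
  · simp only [if_neg h1]
    split
    · exact h0 i
    · exact le_refl 0

lemma zTail_small {f : ℤ → ℝ} (hf : Summable f) (h0 : ∀ i, 0 ≤ f i) {ε : ℝ}
    (hε : 0 < ε) : ∃ m : ℤ, ∀ m' ≥ m, zTail f m' ≤ ε := by
  classical
  obtain ⟨s, hs⟩ := hf.vanishing (e := Set.Ioo (-ε) ε) (Ioo_mem_nhds (by linarith) hε)
  refine ⟨((s.sup Int.toNat : ℕ) : ℤ) + 1, fun m' hm' => ?_⟩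
  refine Summable.tsum_le_of_sum_le (zTail_summable hf m') fun t => ?_
  rw [← Finset.sum_filter]
  have hdis : Disjoint (t.filter fun i => m' ≤ i) s := by
    rw [Finset.disjoint_left]
    intro i hi his
    rw [Finset.mem_filter] at hi
    have h1 : ((s.sup Int.toNat : ℕ) : ℤ) + 1 ≤ i := le_trans hm' hi.2
    have h2 : i.toNat ≤ s.sup Int.toNat := Finset.le_sup his
    omega
  exact le_of_lt (hs _ hdis).2

/-- The number of indices `k` with `m k ≤ i`, for a strictly increasing `m`. -/
noncomputable def wCount (m : ℕ → ℤ) (i : ℤ) : ℕ := sInf {k | i < m k}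

lemma wCount_lt {m : ℕ → ℤ} (hgr : ∀ k : ℕ, (k : ℤ) ≤ m k) (i : ℤ) :
    i < m (wCount m i) := by
  have hne : {k | i < m k}.Nonempty := by
    refine ⟨i.toNat + 1, ?_⟩
    have h := hgr (i.toNat + 1)
    simp only [Set.mem_setOf_eq]
    omega
  exact Nat.sInf_mem hne

lemma wCount_le {m : ℕ → ℤ} {i : ℤ} {k : ℕ} (h : i < m k) : wCount m i ≤ k :=
  Nat.sInf_le h

lemma wCount_iff {m : ℕ → ℤ} (hm : StrictMono m) (hgr : ∀ k : ℕ, (k : ℤ) ≤ m k)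
    (k : ℕ) (i : ℤ) : m k ≤ i ↔ k < wCount m i := by
  constructor
  · intro h
    by_contra hk
    push_neg at hk
    exact absurd (le_trans (hm.monotone hk) h) (not_le.mpr (wCount_lt hgr i))
  · intro h
    by_contra hi
    push_neg at hi
    exact absurd (wCount_le hi) (not_le.mpr h)

lemma wCount_mono {m : ℕ → ℤ} (hgr : ∀ k : ℕ, (k : ℤ) ≤ m k) :
    Monotone (wCount m) := fun i j hij =>
  wCount_le (lt_of_le_of_lt hij (wCount_lt hgr j))

lemma wCount_succ {m : ℕ → ℤ} (hm : StrictMono m) (hgr : ∀ k : ℕ, (k : ℤ) ≤ m k)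
    (i : ℤ) : wCount m (i + 1) ≤ wCount m i + 1 := by
  apply wCount_le
  have h1 : m (wCount m i) < m (wCount m i + 1) := hm (lt_add_one _)
  have h2 := wCount_lt hgr i
  omega

/-- The key estimate: if all tails at `m k` are at most `(1/4)^k`, then the weighted sum
with weight `r ^ (wCount m i)` is summable and bounded by `B + 2`. -/
lemma key_bound {m : ℕ → ℤ} (hm : StrictMono m) (hgr : ∀ k : ℕ, (k : ℤ) ≤ m k)
    {r B : ℝ} (hr1 : 1 < r) (hr2 : r ≤ 2) {f : ℤ → ℝ} (h0 : ∀ i, 0 ≤ f i)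
    (hf : Summable f) (hfB : ∑' i, f i ≤ B)
    (htail : ∀ k : ℕ, zTail f (m k) ≤ (1/4 : ℝ) ^ k) :
    Summable (fun i => r ^ (wCount m i) * f i) ∧
      ∑' i, r ^ (wCount m i) * f i ≤ B + 2 := by
  classical
  have hr0 : (0 : ℝ) < r := lt_trans one_pos hr1
  have hb : ∀ s : Finset ℤ, ∑ i ∈ s, r ^ (wCount m i) * f i ≤ B + 2 := by
    intro s
    set K := s.sup (wCount m) with hK
    have hcK : ∀ i ∈ s, wCount m i ≤ K := fun i hi => Finset.le_sup hi
    have hstep : ∀ i ∈ s, r ^ (wCount m i) * f i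
        = f i + (r - 1) * ∑ k ∈ Finset.range K, (if m k ≤ i then r ^ k * f i else 0) := by
      intro i hi
      have hrne : r ≠ 1 := ne_of_gt hr1
      have hgeom : (r - 1) * ∑ k ∈ Finset.range (wCount m i), r ^ k
          = r ^ (wCount m i) - 1 := by
        have hne : r - 1 ≠ 0 := sub_ne_zero.mpr hrne
        rw [geom_sum_eq hrne, mul_comm, div_mul_cancel₀ _ hne]
      have hite : ∑ k ∈ Finset.range K, (if m k ≤ i then r ^ k * f i else 0)
          = (∑ k ∈ Finset.range (wCount m i), r ^ k) * f i := by
        rw [Finset.sum_congr rfl (fun k _ => show (if m k ≤ i then r ^ k * f i else 0)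
            = if k < wCount m i then r ^ k * f i else 0 from by
          simp [wCount_iff hm hgr])]
        rw [← Finset.sum_filter]
        have hfil : (Finset.range K).filter (fun k => k < wCount m i)
            = Finset.range (wCount m i) := by
          have hK' := hcK i hi
          ext k
          simp only [Finset.mem_filter, Finset.mem_range]
          omega
        rw [hfil, Finset.sum_mul]
      calc r ^ (wCount m i) * f i = (1 + (r ^ (wCount m i) - 1)) * f i := by ring
        _ = (1 + (r - 1) * ∑ k ∈ Finset.range (wCount m i), r ^ k) * f i := by rw [hgeom]
        _ = f i + (r - 1) * ((∑ k ∈ Finset.range (wCount m i), r ^ k) * f i) := by ring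
        _ = f i + (r - 1) * ∑ k ∈ Finset.range K, (if m k ≤ i then r ^ k * f i else 0) := by
            rw [hite]
    have hhalf : ∑ k ∈ Finset.range K, (1/2 : ℝ) ^ k ≤ 2 := by
      have h := Summable.sum_le_tsum (Finset.range K) (fun k _ => by positivity)
        (summable_geometric_of_lt_one (by norm_num) (by norm_num : (1/2 : ℝ) < 1))
      rw [tsum_geometric_of_lt_one (by norm_num) (by norm_num)] at h
      norm_num at h
      exact h
    calc ∑ i ∈ s, r ^ (wCount m i) * f i
        = ∑ i ∈ s, (f i + (r - 1) * ∑ k ∈ Finset.range K,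
            (if m k ≤ i then r ^ k * f i else 0)) := Finset.sum_congr rfl hstep
      _ = ∑ i ∈ s, f i + (r - 1) * ∑ i ∈ s, ∑ k ∈ Finset.range K,
            (if m k ≤ i then r ^ k * f i else 0) := by
          rw [Finset.sum_add_distrib, Finset.mul_sum]
      _ = ∑ i ∈ s, f i + (r - 1) * ∑ k ∈ Finset.range K, ∑ i ∈ s,
            (if m k ≤ i then r ^ k * f i else 0) := by rw [Finset.sum_comm]
      _ ≤ B + (r - 1) * ∑ k ∈ Finset.range K, (1/2 : ℝ) ^ k := by
          apply add_le_add
          · exact le_trans (Summable.sum_le_tsum s (fun i _ => h0 i) hf) hfB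
          · apply mul_le_mul_of_nonneg_left _ (by linarith : (0:ℝ) ≤ r - 1)
            apply Finset.sum_le_sum
            intro k _
            have h1 : ∑ i ∈ s, (if m k ≤ i then r ^ k * f i else 0)
                = r ^ k * ∑ i ∈ s, (if m k ≤ i then f i else 0) := by
              rw [Finset.mul_sum]
              exact Finset.sum_congr rfl fun i _ => by
                split <;> simp
            rw [h1]
            have h2 : ∑ i ∈ s, (if m k ≤ i then f i else 0) ≤ zTail f (m k) :=
              Summable.sum_le_tsum s (fun i _ => by split <;> simp [h0 i]) (zTail_summable hf (m k))
            calc r ^ k * ∑ i ∈ s, (if m k ≤ i then f i else 0)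
                ≤ r ^ k * ((1/4 : ℝ) ^ k) := by
                  apply mul_le_mul_of_nonneg_left _ (by positivity)
                  exact le_trans h2 (htail k)
              _ = (r * (1/4 : ℝ)) ^ k := by rw [mul_pow]
              _ ≤ (1/2 : ℝ) ^ k := by
                  apply pow_le_pow_left₀ (by positivity)
                  linarith
      _ ≤ B + (r - 1) * 2 := by
          apply add_le_add_right
          exact mul_le_mul_of_nonneg_left hhalf (by linarith)
      _ ≤ B + 2 := by linarith
  have hsum : Summable (fun i => r ^ (wCount m i) * f i) :=
    summable_of_sum_le (fun i => mul_nonneg (pow_nonneg hr0.le _) (h0 i)) hb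
  exact ⟨hsum, Summable.tsum_le_of_sum_le hsum hb⟩

/-- Frequency-envelope weight construction: if the nonnegative sequences
`(A n)_{n ∈ ℕ}` converge in `ℓ¹(ℤ)` to `Ainf`, then there is a positive weight `ω`
with `ω i ≤ ω (i+1) ≤ 2^(1/2) ω i`, `ω i → ∞` as `i → +∞`, and a uniform bound on
`∑ ω i * A n i` over all `n ∈ ℕ ∪ {∞}`. -/
theorem stmt1 (A : ℕ → ℤ → ℝ) (Ainf : ℤ → ℝ)
    (hpos : ∀ n i, 0 ≤ A n i) (hposInf : ∀ i, 0 ≤ Ainf i)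
    (hsum : ∀ n, Summable (A n)) (hsumInf : Summable Ainf)
    (hconv : Tendsto (fun n => ∑' i, |A n i - Ainf i|) atTop (nhds 0)) :
    ∃ ω : ℤ → ℝ, (∀ i, 0 < ω i) ∧ (∀ i, ω i ≤ ω (i + 1)) ∧
      (∀ i, ω (i + 1) ≤ 2 ^ ((1 : ℝ) / 2) * ω i) ∧
      Tendsto ω atTop atTop ∧
      ∃ M : ℝ, (∀ n, Summable (fun i => ω i * A n i) ∧ ∑' i, ω i * A n i ≤ M) ∧
        Summable (fun i => ω i * Ainf i) ∧ ∑' i, ω i * Ainf i ≤ M := by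
  classical
  set r : ℝ := 2 ^ ((1 : ℝ) / 2) with hr_def
  have hr1 : 1 < r := by
    rw [hr_def, Real.one_lt_rpow_iff_of_pos (by norm_num)]
    norm_num
  have hr2 : r ≤ 2 := by
    calc r ≤ 2 ^ (1 : ℝ) := Real.rpow_le_rpow_of_exponent_le (by norm_num) (by norm_num)
      _ = 2 := Real.rpow_one 2
  have hr0 : (0 : ℝ) < r := lt_trans one_pos hr1
  -- summability of differences
  have hdiff : ∀ n, Summable fun i => |A n i - Ainf i| := fun n =>
    ((hsum n).sub hsumInf).abs
  -- uniform bound B on the ℓ¹ norms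
  obtain ⟨D0, hD0⟩ := hconv.bddAbove_range
  have hD0' : ∀ n, ∑' i, |A n i - Ainf i| ≤ D0 := fun n => hD0 (Set.mem_range_self n)
  set B : ℝ := D0 + ∑' i, Ainf i with hB
  have hBn : ∀ n, ∑' i, A n i ≤ B := by
    intro n
    calc ∑' i, A n i ≤ ∑' i, (|A n i - Ainf i| + Ainf i) := by
          apply Summable.tsum_le_tsum _ (hsum n) ((hdiff n).add hsumInf)
          intro i
          have h := le_abs_self (A n i - Ainf i)
          linarith
      _ = (∑' i, |A n i - Ainf i|) + ∑' i, Ainf i := Summable.tsum_add (hdiff n) hsumInf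
      _ ≤ B := by
          rw [hB]
          exact add_le_add_left (hD0' n) _
  have hD0nonneg : (0 : ℝ) ≤ D0 :=
    le_trans (tsum_nonneg fun i => abs_nonneg _) (hD0' 0)
  have hBinf : ∑' i, Ainf i ≤ B := by
    rw [hB]
    linarith
  -- uniform smallness of tails
  have hUnif : ∀ ε : ℝ, 0 < ε →
      ∃ m : ℤ, (∀ n, zTail (A n) m ≤ ε) ∧ zTail Ainf m ≤ ε := by
    intro ε hε
    have hε2 : (0 : ℝ) < ε / 2 := by linarith
    obtain ⟨N, hN⟩ := eventually_atTop.mp (hconv.eventually_lt_const hε2)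
    obtain ⟨mI, hmI⟩ := zTail_small hsumInf hposInf hε2
    choose mA hmA using fun n => zTail_small (hsum n) (hpos n) hε
    set m : ℤ := mI ⊔ ((((Finset.range N).sup fun n => (mA n).toNat : ℕ)) : ℤ) with hm
    refine ⟨m, fun n => ?_, le_trans (hmI m le_sup_left) (by linarith)⟩
    by_cases hn : n < N
    · apply hmA n m
      have h1 : (mA n).toNat ≤ (Finset.range N).sup fun n => (mA n).toNat :=
        Finset.le_sup (f := fun n => (mA n).toNat) (Finset.mem_range.mpr hn)
      have h2 : mA n ≤ ((mA n).toNat : ℤ) := Int.self_le_toNat _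
      have h3 : ((((Finset.range N).sup fun n => (mA n).toNat : ℕ)) : ℤ) ≤ m :=
        le_sup_right
      have h4 : ((mA n).toNat : ℤ) ≤ (((Finset.range N).sup fun n => (mA n).toNat : ℕ) : ℤ) := by
        exact_mod_cast h1
      linarith
    · -- n ≥ N
      have hsa := zTail_summable hsumInf m
      have hsd := zTail_summable (hdiff n) m
      have h1 : zTail (A n) m ≤ zTail Ainf m + ∑' i, |A n i - Ainf i| := by
        calc zTail (A n) m
            ≤ ∑' i, ((if m ≤ i then Ainf i else 0) + (if m ≤ i then |A n i - Ainf i| else 0)) := by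
              apply Summable.tsum_le_tsum _ (zTail_summable (hsum n) m) (hsa.add hsd)
              intro i
              by_cases h : m ≤ i
              · simp only [if_pos h]
                have := le_abs_self (A n i - Ainf i)
                linarith
              · simp [h]
          _ = zTail Ainf m + ∑' i, (if m ≤ i then |A n i - Ainf i| else 0) :=
              Summable.tsum_add hsa hsd
          _ ≤ zTail Ainf m + ∑' i, |A n i - Ainf i| := by
              apply add_le_add_right
              apply Summable.tsum_le_tsum _ hsd (hdiff n)
              intro i
              by_cases h : m ≤ i
              · simp [h]
              · simp [h, abs_nonneg]
      have h2 := hN n (le_of_not_gt hn)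
      have h3 := hmI m le_sup_left
      linarith
  -- choose the cut points
  choose mU hmU1 hmU2 using fun k : ℕ => hUnif ((1/4 : ℝ) ^ k) (by positivity)
  set msq : ℕ → ℤ := fun k =>
    (((Finset.range (k + 1)).sup fun j => (mU j).toNat : ℕ) : ℤ) + k with hmsq
  have hgr : ∀ k : ℕ, (k : ℤ) ≤ msq k := by
    intro k
    rw [hmsq]
    simp only
    omega
  have hm_strict : StrictMono msq := by
    apply strictMono_nat_of_lt_succ
    intro k
    have h1 : (Finset.range (k + 1)).sup (fun j => (mU j).toNat)
        ≤ (Finset.range (k + 1 + 1)).sup fun j => (mU j).toNat :=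
      Finset.sup_mono (Finset.range_subset_range.mpr (by omega))
    rw [hmsq]
    simp only
    push_cast
    omega
  have hmsq_ge : ∀ k, mU k ≤ msq k := by
    intro k
    have h1 : (mU k).toNat ≤ (Finset.range (k + 1)).sup fun j => (mU j).toNat :=
      Finset.le_sup (f := fun j => (mU j).toNat) (Finset.mem_range.mpr (Nat.lt_succ_self k))
    have h2 : mU k ≤ ((mU k).toNat : ℤ) := Int.self_le_toNat _
    rw [hmsq]
    simp only
    omega
  have htailA : ∀ n k, zTail (A n) (msq k) ≤ (1/4 : ℝ) ^ k := fun n k =>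
    le_trans (zTail_anti (hsum n) (hpos n) (hmsq_ge k)) (hmU1 k n)
  have htailI : ∀ k, zTail Ainf (msq k) ≤ (1/4 : ℝ) ^ k := fun k =>
    le_trans (zTail_anti hsumInf hposInf (hmsq_ge k)) (hmU2 k)
  -- define the weight
  refine ⟨fun i => r ^ (wCount msq i), fun i => pow_pos hr0 _, ?_, ?_, ?_, ?_⟩
  · intro i
    exact pow_le_pow_right₀ hr1.le (wCount_mono hgr (by omega))
  · intro i
    calc r ^ (wCount msq (i + 1)) ≤ r ^ (wCount msq i + 1) :=
          pow_le_pow_right₀ hr1.le (wCount_succ hm_strict hgr i)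
      _ = r * r ^ (wCount msq i) := by ring
  · have hc : Tendsto (fun i : ℤ => wCount msq i) atTop atTop := by
      rw [Filter.tendsto_atTop_atTop]
      intro K
      refine ⟨msq K, fun i hi => ?_⟩
      exact le_of_lt ((wCount_iff hm_strict hgr K i).mp hi)
    exact (tendsto_pow_atTop_atTop_of_one_lt hr1).comp hc
  · refine ⟨B + 2, fun n => ?_, ?_⟩
    · exact key_bound hm_strict hgr hr1 hr2 (hpos n) (hsum n) (hBn n) (htailA n)
    · exact key_bound hm_strict hgr hr1 hr2 hposInf hsumInf hBinf htailI
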